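/- Let S be a finite nonempty set of primes. If there exists a minimal open subgroup H of GL₂(ℤ_S) (i.e., a finite-index closed subgroup of finite level that is minimal), then S = {2}. -/

import Mathlib

set_option linter.unusedSectionVars false
set_option maxHeartbeats 1000000
set_option synthInstance.maxHeartbeats 100000

namespace MinProof

open Matrix


lemma isSquare_list_prod {M : Type*} [CommMonoid M] :
    ∀ {l : List M}, (∀ x ∈ l, IsSquare x) → IsSquare l.prod
  | [], _ => by simp
  | x :: t, h => by
      rw [List.prod_cons]
      exact (h x (by simp)).mul (isSquare_list_prod fun y hy => h y (by simp [hy]))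

lemma exists_split {G : Type*} [Group G] [Finite G] (g : G) {x y : ℕ}
    (hco : Nat.Coprime x y) (hord : orderOf g = x * y) :
    ∃ u v : G, g = u * v ∧ orderOf u ∣ x ∧ orderOf v ∣ y := by
  have hxy : x * y ≠ 0 := by rw [← hord]; exact (orderOf_pos g).ne'
  have hx0 : x ≠ 0 := fun h => hxy (by simp [h])
  have hy0 : y ≠ 0 := fun h => hxy (by simp [h])
  haveI : NeZero x := ⟨hx0⟩
  haveI : NeZero y := ⟨hy0⟩
  have hd : ∃ d : ℕ, y * d ≡ 1 [MOD x] := by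
    set uy := ZMod.unitOfCoprime y hco.symm with huy
    refine ⟨((uy⁻¹ : (ZMod x)ˣ) : ZMod x).val, ?_⟩
    have h2 : ((y * ((uy⁻¹ : (ZMod x)ˣ) : ZMod x).val : ℕ) : ZMod x) = ((1 : ℕ) : ZMod x) := by
      push_cast
      rw [ZMod.natCast_val, ZMod.cast_id, ← ZMod.coe_unitOfCoprime y hco.symm, ← huy,
        ← Units.val_mul, mul_inv_cancel, Units.val_one]
    exact (ZMod.natCast_eq_natCast_iff _ _ _).mp h2
  have he : ∃ e : ℕ, x * e ≡ 1 [MOD y] := by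
    set ux := ZMod.unitOfCoprime x hco with hux
    refine ⟨((ux⁻¹ : (ZMod y)ˣ) : ZMod y).val, ?_⟩
    have h2 : ((x * ((ux⁻¹ : (ZMod y)ˣ) : ZMod y).val : ℕ) : ZMod y) = ((1 : ℕ) : ZMod y) := by
      push_cast
      rw [ZMod.natCast_val, ZMod.cast_id, ← ZMod.coe_unitOfCoprime x hco, ← hux,
        ← Units.val_mul, mul_inv_cancel, Units.val_one]
    exact (ZMod.natCast_eq_natCast_iff _ _ _).mp h2
  obtain ⟨d, hd⟩ := hd
  obtain ⟨e, he⟩ := he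
  refine ⟨g ^ (y * d), g ^ (x * e), ?_, ?_, ?_⟩
  · rw [← pow_add]
    have hmod : y * d + x * e ≡ 1 [MOD x * y] := by
      refine (Nat.modEq_and_modEq_iff_modEq_mul hco).mp ⟨?_, ?_⟩
      · have h1 : y * d + x * e ≡ 1 + 0 [MOD x] :=
          Nat.ModEq.add hd ((Nat.modEq_zero_iff_dvd).mpr ⟨e, rfl⟩)
        simpa using h1
      · have h1 : y * d + x * e ≡ 0 + 1 [MOD y] :=
          Nat.ModEq.add ((Nat.modEq_zero_iff_dvd).mpr ⟨d, rfl⟩) he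
        simpa using h1
    have := (pow_eq_pow_iff_modEq (x := g) (m := 1) (n := y * d + x * e)).mpr (by rwa [hord])
    simpa using this.symm
  · apply orderOf_dvd_of_pow_eq_one
    rw [← pow_mul]
    have : y * d * x = x * y * d := by ring
    rw [this, pow_mul, ← hord, pow_orderOf_eq_one, one_pow]
  · apply orderOf_dvd_of_pow_eq_one
    rw [← pow_mul]
    have : x * e * y = x * y * e := by ring
    rw [this, pow_mul, ← hord, pow_orderOf_eq_one, one_pow]

lemma exists_primary_list {G : Type*} [Group G] [Finite G] (g : G) :
    ∃ l : List G, g = l.prod ∧ ∀ x ∈ l, ∃ q k : ℕ, Nat.Prime q ∧ orderOf x = q ^ k := by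
  suffices H : ∀ n : ℕ, ∀ g : G, orderOf g = n →
      ∃ l : List G, g = l.prod ∧ ∀ x ∈ l, ∃ q k : ℕ, Nat.Prime q ∧ orderOf x = q ^ k from
    H (orderOf g) g rfl
  intro n
  induction n using Nat.strong_induction_on with
  | _ n ih =>
    intro g hg
    by_cases h1 : n ≤ 1
    · have hn1 : orderOf g = 1 := by have := orderOf_pos g; omega
      exact ⟨[], by simpa using orderOf_eq_one_iff.mp hn1, by simp⟩
    · set q := n.minFac with hqdef
      have hq : q.Prime := Nat.minFac_prime (by omega)
      have hn0 : n ≠ 0 := by omega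
      have hco : Nat.Coprime (q ^ n.factorization q) (ordCompl[q] n) :=
        (Nat.coprime_ordCompl hq hn0).pow_left _
      have hmul : q ^ n.factorization q * ordCompl[q] n = n := Nat.ordProj_mul_ordCompl_eq_self n q
      obtain ⟨u, v, hguv, hu, hv⟩ := exists_split g hco (by rw [hg, hmul])
      have hqd : q ∣ n := n.minFac_dvd
      have hfpos : 1 ≤ n.factorization q := (hq.factorization_pos_of_dvd hn0 hqd)
      have hproj2 : 2 ≤ q ^ n.factorization q := by
        calc 2 ≤ q := hq.two_le
        _ = q ^ 1 := (pow_one q).symm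
        _ ≤ q ^ n.factorization q := Nat.pow_le_pow_right hq.pos hfpos
      have hcpos : 0 < ordCompl[q] n := Nat.ordCompl_pos q hn0
      have hclt : ordCompl[q] n < n := by
        nlinarith [hmul, hcpos, hproj2]
      have hvlt : orderOf v < n :=
        lt_of_le_of_lt (Nat.le_of_dvd hcpos hv) hclt
      obtain ⟨l, hl, hlp⟩ := ih (orderOf v) hvlt v rfl
      obtain ⟨k, _, hk⟩ := (Nat.dvd_prime_pow hq).mp hu
      refine ⟨u :: l, ?_, ?_⟩
      · rw [List.prod_cons, ← hl, hguv]
      · intro z hz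
        rcases List.mem_cons.mp hz with h | h
        · exact ⟨q, k, hq, h ▸ hk⟩
        · exact hlp z h

lemma commute_of_sylow_normal {G : Type*} [Group G] [Finite G]
    (hsyl : ∀ (r : ℕ), Fact r.Prime → ∀ (R : Sylow r G), (R : Subgroup G).Normal)
    {p q : ℕ} (hp : p.Prime) (hq : q.Prime) (hne : p ≠ q)
    {x m : G} {k j : ℕ} (hx : orderOf x = q ^ k) (hm : orderOf m = p ^ j) :
    Commute x m := by
  obtain ⟨Q, hQ⟩ := (IsPGroup.of_card (p := q) (G := ↥(Subgroup.zpowers x)) (n := k)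
    (by rw [Nat.card_zpowers, hx])).exists_le_sylow
  obtain ⟨P, hP⟩ := (IsPGroup.of_card (p := p) (G := ↥(Subgroup.zpowers m)) (n := j)
    (by rw [Nat.card_zpowers, hm])).exists_le_sylow
  haveI fp : Fact p.Prime := ⟨hp⟩
  haveI fq : Fact q.Prime := ⟨hq⟩
  have hPn := hsyl p fp P
  have hQn := hsyl q fq Q
  have hxQ : x ∈ (Q : Subgroup G) := hQ (Subgroup.mem_zpowers x)
  have hmP : m ∈ (P : Subgroup G) := hP (Subgroup.mem_zpowers m)
  have hcP : x * m * x⁻¹ * m⁻¹ ∈ (P : Subgroup G) :=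
    mul_mem (hPn.conj_mem m hmP x) (inv_mem hmP)
  have hcQ : x * m * x⁻¹ * m⁻¹ ∈ (Q : Subgroup G) := by
    have h1 : m * x⁻¹ * m⁻¹ ∈ (Q : Subgroup G) := hQn.conj_mem x⁻¹ (inv_mem hxQ) m
    have h2 := mul_mem hxQ h1
    have h3 : x * (m * x⁻¹ * m⁻¹) = x * m * x⁻¹ * m⁻¹ := by group
    rwa [h3] at h2
  have hdP : ∃ α : ℕ, (x * m * x⁻¹ * m⁻¹) ^ p ^ α = 1 := by
    obtain ⟨α, hα⟩ := P.isPGroup' ⟨_, hcP⟩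
    exact ⟨α, by simpa [← Subgroup.coe_pow, Subtype.ext_iff] using hα⟩
  have hdQ : ∃ β : ℕ, (x * m * x⁻¹ * m⁻¹) ^ q ^ β = 1 := by
    obtain ⟨β, hβ⟩ := Q.isPGroup' ⟨_, hcQ⟩
    exact ⟨β, by simpa [← Subgroup.coe_pow, Subtype.ext_iff] using hβ⟩
  obtain ⟨α, hα⟩ := hdP
  obtain ⟨β, hβ⟩ := hdQ
  have hco : Nat.Coprime (p ^ α) (q ^ β) := Nat.Coprime.pow α β ((Nat.coprime_primes hp hq).mpr hne)
  have h1 : orderOf (x * m * x⁻¹ * m⁻¹) = 1 := by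
    have d1 := orderOf_dvd_of_pow_eq_one hα
    have d2 := orderOf_dvd_of_pow_eq_one hβ
    exact Nat.dvd_one.mp (Nat.dvd_gcd d1 d2 |>.trans hco.gcd_eq_one.dvd)
  have hc1 : x * m * x⁻¹ * m⁻¹ = 1 := orderOf_eq_one_iff.mp h1
  show x * m = m * x
  calc x * m = (x * m * x⁻¹ * m⁻¹) * (m * x) := by group
  _ = m * x := by rw [hc1, one_mul]

lemma sylow_normal_of_minimal {G A : Type*} [Group G] [Finite G] [CommGroup A]
    (f : G →* A) (hsurj : Function.Surjective f)
    (hmin : ∀ K : Subgroup G, K ≠ ⊤ → Subgroup.map f K ≠ ⊤) :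
    ∀ (r : ℕ), Fact r.Prime → ∀ (R : Sylow r G), (R : Subgroup G).Normal := by
  have hco : ∀ M : Subgroup G, IsCoatom M → M.Normal := by
    intro M hM
    have hker : f.ker ≤ M := by
      by_contra hk
      have hlt : M < M ⊔ f.ker := by
        refine lt_of_le_of_ne le_sup_left fun he => hk ?_
        have := le_sup_right (a := M) (b := f.ker)
        rwa [← he] at this
      have htop := hM.2 _ hlt
      have h2 : Subgroup.map f (M ⊔ f.ker) = Subgroup.map f M := by
        rw [Subgroup.map_sup, (Subgroup.map_eq_bot_iff _).mpr le_rfl, sup_bot_eq]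
      rw [htop] at h2
      have h3 : Subgroup.map f ⊤ = ⊤ := Subgroup.map_top_of_surjective f hsurj
      exact hmin M hM.1 (h2.symm.trans h3)
    constructor
    intro m hm g
    have hcomm : g * m * g⁻¹ * m⁻¹ ∈ f.ker := by
      rw [MonoidHom.mem_ker]
      simp only [_root_.map_mul, map_inv]
      rw [mul_comm (f g) (f m)]
      group
    have h4 : g * m * g⁻¹ = (g * m * g⁻¹ * m⁻¹) * m := by group
    rw [h4]
    exact mul_mem (hker hcomm) hm
  intro r hr R
  have h5 := (isNilpotent_of_finite_tfae (G := G)).out 2 3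
  exact h5.mp hco r hr R




lemma zmod_kill (p a : ℕ) [hp : Fact p.Prime] (z : ZMod (p ^ (a + 1)))
    (h : (p : ZMod (p ^ (a + 1))) ^ a * z = 0) :
    ZMod.castHom (dvd_pow_self p (Nat.succ_ne_zero a)) (ZMod p) z = 0 := by
  haveI : NeZero (p ^ (a + 1)) := ⟨pow_ne_zero _ hp.out.ne_zero⟩
  have h1 : ((p ^ a * z.val : ℕ) : ZMod (p ^ (a + 1))) = 0 := by
    rw [Nat.cast_mul, Nat.cast_pow, ZMod.natCast_val, ZMod.cast_id]
    exact h
  have h2 : p ^ (a + 1) ∣ p ^ a * z.val := (ZMod.natCast_eq_zero_iff _ _).mp h1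
  have h2' : p ^ a * p ∣ p ^ a * z.val := by rw [← pow_succ]; exact h2
  have h3 : p ∣ z.val := (Nat.mul_dvd_mul_iff_left (pow_pos hp.out.pos a)).mp h2' 
  have hz : ((z.val : ℕ) : ZMod (p ^ (a + 1))) = z := by rw [ZMod.natCast_val, ZMod.cast_id]
  have h5 : ((z.val : ℕ) : ZMod p) = 0 := (ZMod.natCast_eq_zero_iff _ _).mpr h3
  exact (congrArg (ZMod.castHom (dvd_pow_self p (Nat.succ_ne_zero a)) (ZMod p)) hz.symm).trans
    ((map_natCast _ _).trans h5)

lemma one_add_pow_prime_eq_one {R : Type*} [Ring R] (p a : ℕ) (ha : 1 ≤ a)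
    (h0 : (p : R) ^ (a + 1) = 0) (Y : R) : (1 + (p : R) ^ a * Y) ^ p = 1 := by
  have hc : Commute ((p : R) ^ a * Y) 1 := Commute.one_right _
  rw [add_comm, hc.add_pow]
  rw [Finset.sum_eq_single 0]
  · simp
  · intro m _ hm0
    have hcpY : Commute ((p : R) ^ a) Y := (Nat.cast_commute p Y).pow_left a
    have hzm : ((p : R) ^ a * Y) ^ m = (p : R) ^ (a * m) * Y ^ m := by
      rw [hcpY.mul_pow, ← pow_mul]
    rcases m with _ | m
    · exact absurd rfl hm0
    rcases m with _ | m
    · -- m = 1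
      simp only [zero_add, pow_one, one_pow, mul_one, Nat.choose_one_right]
      rw [mul_assoc, ((Nat.cast_commute p Y).symm).eq, ← mul_assoc, ← pow_succ, h0, zero_mul]
    · -- m ≥ 2
      rw [hzm, one_pow, mul_one]
      have hle : a + 1 ≤ a * (m + 1 + 1) := by nlinarith
      have hsplit : a * (m + 1 + 1) = (a + 1) + (a * (m + 1 + 1) - (a + 1)) := by
        set t := a * (m + 1 + 1); omega
      rw [hsplit, pow_add, h0, zero_mul, zero_mul, zero_mul]
  · intro h; simp at h

lemma endgame (p : ℕ) [hp : Fact p.Prime] (hp2 : p ≠ 2) (a : ℕ) (ha : 1 ≤ a)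
    (G : Type*) [Group G] [Finite G]
    (hsyl : ∀ (r : ℕ), Fact r.Prime → ∀ (R : Sylow r G), (R : Subgroup G).Normal)
    (φ : G →* GL (Fin 2) (ZMod (p ^ (a + 1))))
    (hdet : Function.Surjective ⇑(Matrix.GeneralLinearGroup.det.comp φ))
    (hM : ∀ Y : Matrix (Fin 2) (Fin 2) (ZMod (p ^ (a + 1))), ∃ m : G,
      (∃ k : ℕ, orderOf m = p ^ k) ∧
      ((φ m : GL (Fin 2) (ZMod (p ^ (a + 1)))) : Matrix (Fin 2) (Fin 2) (ZMod (p ^ (a + 1)))) =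
        1 + (p : ZMod (p ^ (a + 1))) ^ a • Y) : False := by
  haveI : NeZero (p ^ (a + 1)) := ⟨pow_ne_zero _ hp.out.ne_zero⟩
  have hdvd : p ∣ p ^ (a + 1) := dvd_pow_self p (Nat.succ_ne_zero a)
  set ρ : G →* (ZMod p)ˣ :=
    (ZMod.unitsMap hdvd).comp (Matrix.GeneralLinearGroup.det.comp φ) with hρdef
  have hρsurj : Function.Surjective ⇑ρ := by
    have h1 := ZMod.unitsMap_surjective hdvd
    exact h1.comp hdet
  have hsq : ∀ g : G, IsSquare (ρ g) := by
    intro g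
    obtain ⟨l, hlg, hl⟩ := exists_primary_list g
    rw [hlg, map_list_prod]
    apply isSquare_list_prod
    intro z hz
    simp only [List.mem_map] at hz
    obtain ⟨x, hxl, rfl⟩ := hz
    obtain ⟨q, k, hq, hqk⟩ := hl x hxl
    by_cases hqp : q = p
    · subst hqp
      have h1 : orderOf (ρ x) ∣ q ^ k := hqk ▸ orderOf_map_dvd ρ x
      have h2 : orderOf (ρ x) ∣ q - 1 := by
        have h3 := orderOf_dvd_card (x := ρ x)
        rwa [ZMod.card_units] at h3
      have hco : Nat.Coprime (q ^ k) (q - 1) := by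
        apply Nat.Coprime.pow_left
        refine (Nat.Prime.coprime_iff_not_dvd hq).mpr fun hdvd' => ?_
        have h4 : 0 < q - 1 := by have := hq.two_le; omega
        have := Nat.le_of_dvd h4 hdvd'
        omega
      have h5 : orderOf (ρ x) = 1 := by
        have h6 := Nat.dvd_gcd h1 h2
        rwa [Nat.Coprime.gcd_eq_one hco, Nat.dvd_one] at h6
      rw [orderOf_eq_one_iff.mp h5]
      exact IsSquare.one
    · set red := (ZMod.castHom hdvd (ZMod p)).mapMatrix (m := Fin 2) with hreddef
      set V : Matrix (Fin 2) (Fin 2) (ZMod (p ^ (a + 1))) := ((φ x) : Matrix (Fin 2) (Fin 2) (ZMod (p ^ (a + 1)))) with hVdef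
      have hcomm : ∀ B : Matrix (Fin 2) (Fin 2) (ZMod p), Commute B (red V) := by
        intro B
        set Y : Matrix (Fin 2) (Fin 2) (ZMod (p ^ (a + 1))) :=
          fun i j => ((B i j).val : ZMod (p ^ (a + 1))) with hYdef
        have hredY : red Y = B := by
          ext i j
          rw [hreddef, RingHom.mapMatrix_apply, Matrix.map_apply]
          rw [hYdef]
          simp only [map_natCast]
          rw [ZMod.natCast_val, ZMod.cast_id]
        obtain ⟨m, ⟨kk, hmj⟩, hmval⟩ := hM Y
        have hcxm : Commute x m :=
          commute_of_sylow_normal hsyl hp.out hq (fun h => hqp h.symm) hqk hmj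
        have h3 : (φ x) * (φ m) = (φ m) * (φ x) := by
          rw [← _root_.map_mul, ← _root_.map_mul, hcxm.eq]
        have h4 : V * ((φ m) : Matrix (Fin 2) (Fin 2) (ZMod (p ^ (a + 1)))) = ((φ m) : Matrix (Fin 2) (Fin 2) (ZMod (p ^ (a + 1)))) * V := by
          have h5 := congrArg Units.val h3
          simpa [hVdef] using h5
        rw [hmval] at h4
        have h5 : (p : ZMod (p ^ (a + 1))) ^ a • (V * Y) =
            (p : ZMod (p ^ (a + 1))) ^ a • (Y * V) := by
          rw [mul_add, add_mul, mul_one, one_mul] at h4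
          have h6 := add_left_cancel h4
          rwa [Matrix.mul_smul, Matrix.smul_mul] at h6
        have h7 : red (V * Y - Y * V) = 0 := by
          ext i j
          have h8 : (p : ZMod (p ^ (a + 1))) ^ a * ((V * Y - Y * V) i j) = 0 := by
            have h9 : (p : ZMod (p ^ (a + 1))) ^ a • (V * Y - Y * V) = 0 := by
              rw [smul_sub, h5, sub_self]
            have h10 := congrArg (fun M => M i j) h9
            simpa [Matrix.smul_apply] using h10
          have h11 := zmod_kill p a _ h8
          rw [hreddef, RingHom.mapMatrix_apply, Matrix.map_apply]
          simpa using h11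
        have h12 : red V * B - B * red V = 0 := by
          rw [map_sub, _root_.map_mul, _root_.map_mul, hredY] at h7
          exact h7
        exact (sub_eq_zero.mp h12).symm
      have hscal : red V ∈ Set.range ⇑(Matrix.scalar (Fin 2)) :=
        mem_range_scalar_of_commute_single (fun i j _ => hcomm _)
      obtain ⟨r, hr⟩ := hscal
      have hdetval : ((ρ x) : ZMod p) = r * r := by
        have h13 : ((ρ x) : ZMod p) = (red V).det := by
          have e1 : ρ x = ZMod.unitsMap hdvd (Matrix.GeneralLinearGroup.det (φ x)) := rfl
          rw [e1, ZMod.unitsMap_def, Units.coe_map]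
          show ZMod.castHom hdvd (ZMod p)
            ((Matrix.GeneralLinearGroup.det (φ x)) : ZMod (p ^ (a + 1))) = (red V).det
          rw [Matrix.GeneralLinearGroup.val_det_apply, RingHom.map_det, hreddef]
        rw [h13, ← hr, Matrix.scalar_apply, Matrix.det_diagonal, Fin.prod_univ_two]
      have hur : IsUnit r := by
        have h14 : IsUnit ((ρ x) : ZMod p) := (ρ x).isUnit
        rw [hdetval] at h14
        exact isUnit_of_mul_isUnit_left h14
      refine ⟨hur.unit, ?_⟩
      apply Units.ext
      rw [Units.val_mul, IsUnit.unit_spec, hdetval]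
  obtain ⟨b, hb⟩ := FiniteField.exists_nonsquare (F := ZMod p)
    (by rw [ZMod.ringChar_zmod_n]; exact hp2)
  have hb0 : b ≠ 0 := fun h => hb (h ▸ ⟨0, (mul_zero 0).symm⟩)
  have hbu : IsUnit b := isUnit_iff_ne_zero.mpr hb0
  obtain ⟨g, hg⟩ := hρsurj hbu.unit
  obtain ⟨s, hs⟩ := hsq g
  apply hb
  refine ⟨(s : ZMod p), ?_⟩
  have h15 := congrArg Units.val (hg.symm.trans hs)
  rw [Units.val_mul] at h15
  rw [← IsUnit.unit_spec hbu]
  exact h15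




/-! ### p-adic helpers -/

lemma pneg_lt_one {p : ℕ} (hp : Fact p.Prime) {n : ℕ} (hn : 1 ≤ n) :
    (p : ℝ) ^ (-(n : ℤ)) < 1 := by
  have hp1 : (1 : ℝ) < (p : ℝ) := by exact_mod_cast hp.out.one_lt
  have := zpow_lt_zpow_right₀ hp1 (show -(n:ℤ) < 0 by omega)
  simpa using this

lemma pneg_antitone {p : ℕ} (hp : Fact p.Prime) {m n : ℕ} (hmn : m ≤ n) :
    (p : ℝ) ^ (-(n : ℤ)) ≤ (p : ℝ) ^ (-(m : ℤ)) := by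
  have hp1 : (1 : ℝ) ≤ (p : ℝ) := by exact_mod_cast hp.out.one_le
  exact zpow_le_zpow_right₀ hp1 (by omega)

lemma norm_one_add {p : ℕ} [hp : Fact p.Prime] {w : ℤ_[p]} (h : ‖w‖ < 1) : ‖1 + w‖ = 1 := by
  apply le_antisymm
  · exact le_trans (PadicInt.nonarchimedean 1 w) (by simp [max_le_iff, h.le])
  · by_contra hlt
    push_neg at hlt
    have h2 : ‖(1 : ℤ_[p])‖ ≤ max ‖1 + w‖ ‖-w‖ := by
      have h3 := PadicInt.nonarchimedean (1 + w) (-w)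
      simpa using h3
    rw [norm_one, norm_neg] at h2
    exact absurd h2 (not_le.mpr (max_lt hlt h))

lemma red_eq_iff_norm {p : ℕ} [hp : Fact p.Prime] (n : ℕ) (x y : ℤ_[p]) :
    PadicInt.toZModPow n x = PadicInt.toZModPow n y ↔ ‖x - y‖ ≤ (p : ℝ) ^ (-(n : ℤ)) := by
  rw [← sub_eq_zero, ← map_sub]
  rw [show (PadicInt.toZModPow n (x - y) = 0) ↔
      x - y ∈ RingHom.ker (PadicInt.toZModPow (p := p) n) from (RingHom.mem_ker).symm]
  rw [PadicInt.ker_toZModPow, ← PadicInt.norm_le_pow_iff_mem_span_pow]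

/-! ### global setup -/

variable {ι : Type*} [Fintype ι] [DecidableEq ι] (P : ι → ℕ) [hP : ∀ i, Fact (P i).Prime]

noncomputable def redGL (i : ι) (n : ℕ) : GL (Fin 2) ℤ_[P i] →* GL (Fin 2) (ZMod (P i ^ n)) :=
  Units.map (RingHom.mapMatrix (PadicInt.toZModPow n)).toMonoidHom

noncomputable def PiRed (e : ι → ℕ) : (∀ i, GL (Fin 2) ℤ_[P i]) →* ∀ i, GL (Fin 2) (ZMod (P i ^ e i)) :=
  Pi.monoidHom fun i => (redGL P i (e i)).comp (Pi.evalMonoidHom _ i)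

noncomputable def detBig : (∀ i, GL (Fin 2) ℤ_[P i]) →* ∀ i, ℤ_[P i]ˣ :=
  Pi.monoidHom fun i =>
    Matrix.GeneralLinearGroup.det.comp (Pi.evalMonoidHom (fun j => GL (Fin 2) ℤ_[P j]) i)

noncomputable def detFin (e : ι → ℕ) : (∀ i, GL (Fin 2) (ZMod (P i ^ e i))) →* ∀ i, (ZMod (P i ^ e i))ˣ :=
  Pi.monoidHom fun i => Matrix.GeneralLinearGroup.det.comp (Pi.evalMonoidHom _ i)

noncomputable def redU (e : ι → ℕ) : (∀ i, ℤ_[P i]ˣ) →* ∀ i, (ZMod (P i ^ e i))ˣ :=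
  Pi.monoidHom fun i =>
    (Units.map (PadicInt.toZModPow (e i)).toMonoidHom).comp (Pi.evalMonoidHom _ i)

lemma square_comm (e : ι → ℕ) (x : ∀ i, GL (Fin 2) ℤ_[P i]) :
    detFin P e (PiRed P e x) = redU P e (detBig P x) := by
  funext i
  apply Units.ext
  show ((Matrix.GeneralLinearGroup.det (redGL P i (e i) (x i))) : ZMod (P i ^ e i)) =
    ((Units.map (PadicInt.toZModPow (e i)).toMonoidHom
      (Matrix.GeneralLinearGroup.det (x i))) : ZMod (P i ^ e i))
  rw [Matrix.GeneralLinearGroup.val_det_apply, Units.coe_map]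
  show ((redGL P i (e i) (x i) : Matrix (Fin 2) (Fin 2) (ZMod (P i ^ e i)))).det =
    PadicInt.toZModPow (e i) ((Matrix.GeneralLinearGroup.det (x i)) : ℤ_[P i])
  rw [Matrix.GeneralLinearGroup.val_det_apply, RingHom.map_det]
  rfl

lemma mem_ker_iff (e : ι → ℕ) (x : ∀ i, GL (Fin 2) ℤ_[P i]) :
    PiRed P e x = 1 ↔ ∀ (i : ι) (j k : Fin 2),
      ‖(x i).val j k - (1 : Matrix (Fin 2) (Fin 2) ℤ_[P i]) j k‖ ≤ (P i : ℝ) ^ (-(e i : ℤ)) := by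
  rw [funext_iff]
  refine forall_congr' fun i => ?_
  show redGL P i (e i) (x i) = 1 ↔ _
  rw [Units.ext_iff]
  show (RingHom.mapMatrix (PadicInt.toZModPow (e i))) ((x i).val) = 1 ↔ _
  rw [RingHom.mapMatrix_apply, ← Matrix.ext_iff]
  refine forall_congr' fun j => forall_congr' fun k => ?_
  rw [Matrix.map_apply]
  have h1 : (1 : Matrix (Fin 2) (Fin 2) (ZMod (P i ^ e i))) j k =
      PadicInt.toZModPow (e i) ((1 : Matrix (Fin 2) (Fin 2) ℤ_[P i]) j k) := by
    by_cases hjk : j = k <;> simp [Matrix.one_apply, hjk]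
  rw [h1, red_eq_iff_norm]

lemma isClosed_ker (e : ι → ℕ) :
    IsClosed {x : ∀ i, GL (Fin 2) ℤ_[P i] | PiRed P e x = 1} := by
  have hset : {x : ∀ i, GL (Fin 2) ℤ_[P i] | PiRed P e x = 1} =
      ⋂ (i : ι), ⋂ (j : Fin 2), ⋂ (k : Fin 2),
        {x : ∀ i, GL (Fin 2) ℤ_[P i] |
          ‖(x i).val j k - (1 : Matrix (Fin 2) (Fin 2) ℤ_[P i]) j k‖ ≤ (P i : ℝ) ^ (-(e i : ℤ))} := by
    ext x
    simp only [Set.mem_setOf_eq, Set.mem_iInter, mem_ker_iff]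
  rw [hset]
  refine isClosed_iInter fun i => isClosed_iInter fun j => isClosed_iInter fun k => ?_
  have hcont : Continuous fun x : ∀ i, GL (Fin 2) ℤ_[P i] =>
      ‖(x i).val j k - (1 : Matrix (Fin 2) (Fin 2) ℤ_[P i]) j k‖ := by
    apply Continuous.norm
    apply Continuous.sub _ continuous_const
    have hval : Continuous fun g : GL (Fin 2) ℤ_[P i] =>
        (g : Matrix (Fin 2) (Fin 2) ℤ_[P i]) := Units.continuous_val
    exact (continuous_apply k).comp ((continuous_apply j).comp
      (hval.comp (continuous_apply i)))
  exact isClosed_le hcont continuous_const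

/-! ### neighborhood basis extraction -/

lemma pi_nhds_aux {κ : Type*} {β : κ → Type*} [∀ j, TopologicalSpace (β j)]
    {f : ∀ j, β j} {W : Set (∀ j, β j)} (hW : W ∈ nhds f) :
    ∃ t : ∀ j, Set (β j), (∀ j, t j ∈ nhds (f j)) ∧ {g | ∀ j, g j ∈ t j} ⊆ W := by
  rw [nhds_pi] at hW
  obtain ⟨I, _, t, ht, hsub⟩ := Filter.mem_pi.mp hW
  exact ⟨t, ht, fun g hg => hsub fun j _ => hg j⟩

lemma padic_nhds_ball {p : ℕ} [hp : Fact p.Prime] {c : ℤ_[p]} {W : Set ℤ_[p]}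
    (hW : W ∈ nhds c) :
    ∃ n : ℕ, ∀ z : ℤ_[p], ‖z - c‖ ≤ (p : ℝ) ^ (-(n : ℤ)) → z ∈ W := by
  obtain ⟨ε, hε, hball⟩ := Metric.mem_nhds_iff.mp hW
  have hp1 : ((p : ℝ))⁻¹ < 1 := by
    rw [inv_lt_one_iff₀]
    right
    exact_mod_cast hp.out.one_lt
  obtain ⟨n, hn⟩ := exists_pow_lt_of_lt_one hε hp1
  refine ⟨n, fun z hz => hball ?_⟩
  rw [Metric.mem_ball, dist_eq_norm]
  refine lt_of_le_of_lt hz ?_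
  rw [_root_.zpow_neg, zpow_natCast, ← inv_pow]
  exact hn

lemma matrix_nhds_ball {p : ℕ} [hp : Fact p.Prime] {M₀ : Matrix (Fin 2) (Fin 2) ℤ_[p]}
    {W : Set (Matrix (Fin 2) (Fin 2) ℤ_[p])} (hW : W ∈ nhds M₀) :
    ∃ n : ℕ, ∀ A : Matrix (Fin 2) (Fin 2) ℤ_[p],
      (∀ j k, ‖A j k - M₀ j k‖ ≤ (p : ℝ) ^ (-(n : ℤ))) → A ∈ W := by
  obtain ⟨t, ht, hsub⟩ := pi_nhds_aux (f := M₀) (W := W) hW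
  have hrow : ∀ j : Fin 2, ∃ s : ∀ _ : Fin 2, Set ℤ_[p],
      (∀ k, s k ∈ nhds (M₀ j k)) ∧ {r : Fin 2 → ℤ_[p] | ∀ k, r k ∈ s k} ⊆ t j := fun j =>
    pi_nhds_aux (ht j)
  choose s hs hssub using hrow
  have hent : ∀ j k : Fin 2, ∃ n : ℕ, ∀ z : ℤ_[p],
      ‖z - M₀ j k‖ ≤ (p : ℝ) ^ (-(n : ℤ)) → z ∈ s j k := fun j k =>
    padic_nhds_ball (hs j k)
  choose nn hnn using hent
  refine ⟨Finset.univ.sup (fun jk : Fin 2 × Fin 2 => nn jk.1 jk.2), ?_⟩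
  intro A hA
  apply hsub
  intro j
  apply hssub j
  intro k
  apply hnn j k
  refine le_trans (hA j k) (pneg_antitone hp ?_)
  exact Finset.le_sup (f := fun jk : Fin 2 × Fin 2 => nn jk.1 jk.2)
    (Finset.mem_univ (j, k))

lemma inv_entries_close {p : ℕ} [hp : Fact p.Prime] (g : GL (Fin 2) ℤ_[p]) (n : ℕ)
    (hg : ∀ j k, ‖g.val j k - (1 : Matrix (Fin 2) (Fin 2) ℤ_[p]) j k‖ ≤ (p : ℝ) ^ (-(n : ℤ))) :
    ∀ j k, ‖g.inv j k - (1 : Matrix (Fin 2) (Fin 2) ℤ_[p]) j k‖ ≤ (p : ℝ) ^ (-(n : ℤ)) := by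
  have key : g.inv - 1 = g.inv * (1 - g.val) := by
    rw [mul_sub, mul_one, g.inv_val]
  intro j k
  have h1 : g.inv j k - (1 : Matrix (Fin 2) (Fin 2) ℤ_[p]) j k = (g.inv - 1) j k := by
    simp [Matrix.sub_apply]
  rw [h1, key, Matrix.mul_apply, Fin.sum_univ_two]
  have hterm : ∀ l : Fin 2, ‖g.inv j l * (1 - g.val) l k‖ ≤ (p : ℝ) ^ (-(n : ℤ)) := by
    intro l
    rw [norm_mul]
    have h2 : ‖(1 - g.val) l k‖ ≤ (p : ℝ) ^ (-(n : ℤ)) := by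
      have h3 : (1 - g.val) l k = -(g.val l k - (1 : Matrix (Fin 2) (Fin 2) ℤ_[p]) l k) := by
        simp [Matrix.sub_apply]
      rw [h3, norm_neg]
      exact hg l k
    calc ‖g.inv j l‖ * ‖(1 - g.val) l k‖ ≤ 1 * ((p : ℝ) ^ (-(n : ℤ))) := by
          apply mul_le_mul (PadicInt.norm_le_one _) h2 (norm_nonneg _) zero_le_one
    _ = (p : ℝ) ^ (-(n : ℤ)) := one_mul _
  exact le_trans (PadicInt.nonarchimedean _ _) (max_le (hterm 0) (hterm 1))

lemma exists_level {H : Subgroup (∀ i, GL (Fin 2) ℤ_[P i])}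
    (hopen : IsOpen (H : Set (∀ i, GL (Fin 2) ℤ_[P i]))) :
    ∃ e : ι → ℕ, ∀ x, PiRed P e x = 1 → x ∈ H := by
  obtain ⟨I, u, hu, hsub⟩ := isOpen_pi_iff.mp hopen 1 H.one_mem
  have key : ∀ i ∈ I, ∃ n : ℕ, ∀ g : GL (Fin 2) ℤ_[P i],
      (∀ j k, ‖g.val j k - (1 : Matrix (Fin 2) (Fin 2) ℤ_[P i]) j k‖ ≤ (P i : ℝ) ^ (-(n : ℤ)))
        → g ∈ u i := by
    intro i hi
    obtain ⟨huo, hu1⟩ := hu i hi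
    have hnh : u i ∈ nhds (1 : GL (Fin 2) ℤ_[P i]) := huo.mem_nhds hu1
    rw [Units.isEmbedding_embedProduct.toIsInducing.nhds_eq_comap] at hnh
    obtain ⟨V, hV, hVsub⟩ := Filter.mem_comap.mp hnh
    rw [_root_.map_one] at hV
    rw [show (1 : Matrix (Fin 2) (Fin 2) ℤ_[P i] × (Matrix (Fin 2) (Fin 2) ℤ_[P i])ᵐᵒᵖ) =
      ((1 : Matrix (Fin 2) (Fin 2) ℤ_[P i]), (1 : (Matrix (Fin 2) (Fin 2) ℤ_[P i])ᵐᵒᵖ))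
      from rfl] at hV
    obtain ⟨V₁, hV₁, V₂, hV₂, hVp⟩ := mem_nhds_prod_iff.mp hV
    have hV₂' : (MulOpposite.op (α := Matrix (Fin 2) (Fin 2) ℤ_[P i])) ⁻¹' V₂ ∈
        nhds (1 : Matrix (Fin 2) (Fin 2) ℤ_[P i]) := by
      apply MulOpposite.continuous_op.continuousAt.preimage_mem_nhds
      rwa [MulOpposite.op_one]
    obtain ⟨n₁, hn₁⟩ := matrix_nhds_ball hV₁
    obtain ⟨n₂, hn₂⟩ := matrix_nhds_ball hV₂'
    refine ⟨max n₁ n₂, ?_⟩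
    intro g hg
    apply hVsub
    show (g.val, MulOpposite.op g.inv) ∈ V
    apply hVp
    constructor
    · apply hn₁
      intro j k
      refine le_trans (hg j k) (pneg_antitone (hP i) (le_max_left _ _))
    · show MulOpposite.op g.inv ∈ V₂
      apply hn₂
      intro j k
      refine le_trans (inv_entries_close g (max n₁ n₂) hg j k)
        (pneg_antitone (hP i) (le_max_right _ _))
  choose! nfun hnfun using key
  refine ⟨nfun, ?_⟩
  intro x hx
  apply hsub
  rw [Set.mem_pi]
  intro i hi
  apply hnfun i hi
  intro j k
  exact (mem_ker_iff P nfun x).mp hx i j k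




noncomputable def diagU {p : ℕ} [Fact p.Prime] (w : ℤ_[p]ˣ) : GL (Fin 2) ℤ_[p] where
  val := Matrix.diagonal (fun j => if j = 0 then (w : ℤ_[p]) else 1)
  inv := Matrix.diagonal (fun j => if j = 0 then ((w⁻¹ : ℤ_[p]ˣ) : ℤ_[p]) else 1)
  val_inv := by
    rw [Matrix.diagonal_mul_diagonal]
    have hd : (fun i : Fin 2 => (if i = 0 then (w : ℤ_[p]) else 1) *
        (if i = 0 then ((w⁻¹ : ℤ_[p]ˣ) : ℤ_[p]) else 1)) = fun _ => (1 : ℤ_[p]) := by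
      funext j
      by_cases hj : j = 0 <;> simp [hj]
    rw [hd, Matrix.diagonal_one]
  inv_val := by
    rw [Matrix.diagonal_mul_diagonal]
    have hd : (fun i : Fin 2 => (if i = 0 then ((w⁻¹ : ℤ_[p]ˣ) : ℤ_[p]) else 1) *
        (if i = 0 then (w : ℤ_[p]) else 1)) = fun _ => (1 : ℤ_[p]) := by
      funext j
      by_cases hj : j = 0 <;> simp [hj]
    rw [hd, Matrix.diagonal_one]

lemma det_diagU {p : ℕ} [Fact p.Prime] (w : ℤ_[p]ˣ) :
    Matrix.GeneralLinearGroup.det (diagU w) = w := by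
  apply Units.ext
  rw [Matrix.GeneralLinearGroup.val_det_apply]
  show (Matrix.diagonal (fun j : Fin 2 => if j = 0 then (w : ℤ_[p]) else 1)).det = (w : ℤ_[p])
  rw [Matrix.det_diagonal, Fin.prod_univ_two]
  simp

lemma redGL_diagU {p : ℕ} [Fact p.Prime] (n : ℕ) (w : ℤ_[p]ˣ)
    (hw : Units.map (PadicInt.toZModPow n).toMonoidHom w = 1) :
    Units.map (RingHom.mapMatrix (PadicInt.toZModPow (p := p) n)).toMonoidHom (diagU w) = 1 := by
  have hw' : PadicInt.toZModPow n (w : ℤ_[p]) = 1 := by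
    have h1 := congrArg Units.val hw
    simpa using h1
  apply Units.ext
  show (RingHom.mapMatrix (PadicInt.toZModPow n)) (diagU w).val = 1
  rw [RingHom.mapMatrix_apply]
  show (Matrix.diagonal (fun j : Fin 2 => if j = 0 then (w : ℤ_[p]) else 1)).map
    (PadicInt.toZModPow n) = 1
  rw [Matrix.diagonal_map (map_zero _)]
  have hd : (fun m : Fin 2 => PadicInt.toZModPow n (if m = 0 then (w : ℤ_[p]) else 1)) =
      fun _ => (1 : ZMod (p ^ n)) := by
    funext j
    by_cases hj : j = 0 <;> simp [hj, hw']
  rw [hd, Matrix.diagonal_one]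

lemma exists_unit_lift {p : ℕ} [hp : Fact p.Prime] (n : ℕ) (hn : 1 ≤ n) (ub : (ZMod (p ^ n))ˣ) :
    ∃ u : ℤ_[p]ˣ, Units.map (PadicInt.toZModPow n).toMonoidHom u = ub := by
  haveI : NeZero (p ^ n) := ⟨pow_ne_zero _ hp.out.ne_zero⟩
  set z : ℤ_[p] := (((ub : ZMod (p ^ n)).val : ℕ) : ℤ_[p]) with hzdef
  set z' : ℤ_[p] := ((((ub⁻¹ : (ZMod (p ^ n))ˣ) : ZMod (p ^ n)).val : ℕ) : ℤ_[p]) with hz'def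
  have hz : PadicInt.toZModPow n z = (ub : ZMod (p ^ n)) := by
    rw [hzdef, map_natCast, ZMod.natCast_val, ZMod.cast_id]
  have hz' : PadicInt.toZModPow n z' = ((ub⁻¹ : (ZMod (p ^ n))ˣ) : ZMod (p ^ n)) := by
    rw [hz'def, map_natCast, ZMod.natCast_val, ZMod.cast_id]
  have h1 : PadicInt.toZModPow n (z * z') = PadicInt.toZModPow n 1 := by
    rw [_root_.map_mul, hz, hz', _root_.map_one, ← Units.val_mul, mul_inv_cancel, Units.val_one]
  have h2 : ‖z * z' - 1‖ ≤ (p : ℝ) ^ (-(n : ℤ)) := (red_eq_iff_norm n _ _).mp h1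
  have h3 : ‖z * z' - 1‖ < 1 := lt_of_le_of_lt h2 (pneg_lt_one hp hn)
  have h4 : ‖z * z'‖ = 1 := by
    have h5 := norm_one_add (w := z * z' - 1) h3
    have h6 : 1 + (z * z' - 1) = z * z' := by ring
    rwa [h6] at h5
  have h7 : IsUnit z := by
    apply isUnit_of_mul_isUnit_left (y := z')
    rw [PadicInt.isUnit_iff]
    exact h4
  refine ⟨h7.unit, Units.ext ?_⟩
  rw [Units.coe_map]
  show PadicInt.toZModPow n (h7.unit : ℤ_[p]) = (ub : ZMod (p ^ n))
  rw [IsUnit.unit_spec, hz]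

lemma isUnit_one_add_smul {p : ℕ} [hp : Fact p.Prime] (a : ℕ) (ha : 1 ≤ a)
    (Yt : Matrix (Fin 2) (Fin 2) ℤ_[p]) : IsUnit (1 + ((p : ℤ_[p]) ^ a) • Yt) := by
  rw [Matrix.isUnit_iff_isUnit_det, PadicInt.isUnit_iff]
  have hdet : (1 + ((p : ℤ_[p]) ^ a) • Yt).det = 1 + ((p : ℤ_[p]) ^ a) *
      (Yt 0 0 + Yt 1 1 + ((p : ℤ_[p]) ^ a) * Yt 0 0 * Yt 1 1
        - ((p : ℤ_[p]) ^ a) * Yt 0 1 * Yt 1 0) := by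
    rw [Matrix.det_fin_two]
    simp only [Matrix.add_apply, Matrix.smul_apply, Matrix.one_apply, smul_eq_mul]
    norm_num
    ring
  rw [hdet]
  apply norm_one_add
  have h1 : ‖((p : ℤ_[p]) ^ a) * (Yt 0 0 + Yt 1 1 + ((p : ℤ_[p]) ^ a) * Yt 0 0 * Yt 1 1
      - ((p : ℤ_[p]) ^ a) * Yt 0 1 * Yt 1 0)‖ ≤ (p : ℝ) ^ (-(a : ℤ)) := by
    rw [norm_mul, PadicInt.norm_p_pow]
    calc (p : ℝ) ^ (-(a : ℤ)) * ‖_‖ ≤ (p : ℝ) ^ (-(a : ℤ)) * 1 := by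
          apply mul_le_mul_of_nonneg_left (PadicInt.norm_le_one _)
          positivity
    _ = (p : ℝ) ^ (-(a : ℤ)) := mul_one _
  exact lt_of_le_of_lt h1 (pneg_lt_one hp ha)

lemma matrix_one_add_pow {p : ℕ} [hp : Fact p.Prime] {a : ℕ} (ha : 1 ≤ a)
    (Y : Matrix (Fin 2) (Fin 2) (ZMod (p ^ (a + 1)))) :
    (1 + ((p : ZMod (p ^ (a + 1))) ^ a) • Y) ^ p = 1 := by
  have hsm : ((p : ZMod (p ^ (a + 1))) ^ a) • Y =
      ((p : Matrix (Fin 2) (Fin 2) (ZMod (p ^ (a + 1)))) ^ a) * Y := by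
    rw [Algebra.smul_def, map_pow, map_natCast]
  rw [hsm]
  apply one_add_pow_prime_eq_one p a ha
  rw [← Nat.cast_pow]
  have h1 : ((p ^ (a + 1) : ℕ) : Matrix (Fin 2) (Fin 2) (ZMod (p ^ (a + 1)))) =
      algebraMap (ZMod (p ^ (a + 1))) (Matrix (Fin 2) (Fin 2) (ZMod (p ^ (a + 1))))
        ((p ^ (a + 1) : ℕ) : ZMod (p ^ (a + 1))) := (map_natCast _ _).symm
  rw [h1, ZMod.natCast_self, map_zero]



end MinProof



/-- Let `S` be a finite nonempty set of primes, and consider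
`GL₂(ℤ_S) = ∏_{p ∈ S} GL₂(ℤ_p)` with componentwise determinant
`det : GL₂(ℤ_S) → ℤ_Sˣ = ∏_{p ∈ S} ℤ_pˣ`.  If there exists a minimal open subgroup `H`
of `GL₂(ℤ_S)` (a finite-index closed subgroup, of finite level, i.e. open, such that
`det(H) = ℤ_Sˣ` but `det(K) ≠ ℤ_Sˣ` for every proper closed subgroup `K` of `H`),
then `S = {2}`. -/
theorem minimal_implies_S_eq_two (S : Finset ℕ) (hne : S.Nonempty)
    (hprime : ∀ p ∈ S, Nat.Prime p) :
    (haveI : ∀ p : {x // x ∈ S}, Fact (Nat.Prime p.1) := fun p => ⟨hprime p.1 p.2⟩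
      ∃ H : Subgroup (∀ p : {x // x ∈ S}, GL (Fin 2) ℤ_[p.1]),
        IsClosed (H : Set (∀ p : {x // x ∈ S}, GL (Fin 2) ℤ_[p.1])) ∧
        IsOpen (H : Set (∀ p : {x // x ∈ S}, GL (Fin 2) ℤ_[p.1])) ∧
        H.index ≠ 0 ∧
        Subgroup.map
          (Pi.monoidHom fun p : {x // x ∈ S} =>
            Matrix.GeneralLinearGroup.det.comp
              (Pi.evalMonoidHom (fun q : {x // x ∈ S} => GL (Fin 2) ℤ_[q.1]) p)) H = ⊤ ∧
        ∀ K : Subgroup (∀ p : {x // x ∈ S}, GL (Fin 2) ℤ_[p.1]),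
          IsClosed (K : Set (∀ p : {x // x ∈ S}, GL (Fin 2) ℤ_[p.1])) → K < H →
          Subgroup.map
            (Pi.monoidHom fun p : {x // x ∈ S} =>
              Matrix.GeneralLinearGroup.det.comp
                (Pi.evalMonoidHom (fun q : {x // x ∈ S} => GL (Fin 2) ℤ_[q.1]) p)) K ≠ ⊤) →
    S = {2} := by
  intro hex
  haveI inst : ∀ p : {x // x ∈ S}, Fact (Nat.Prime p.1) := fun p => ⟨hprime p.1 p.2⟩
  by_contra hS
  have hodd : ∃ p₀, ∃ _ : p₀ ∈ S, p₀ ≠ 2 := by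
    by_contra hno
    push_neg at hno
    apply hS
    obtain ⟨q, hq⟩ := hne
    have hq2 := hno q hq
    exact Finset.eq_singleton_iff_unique_mem.mpr ⟨hq2 ▸ hq, fun x hx => hno x hx⟩
  obtain ⟨p₀, hp₀S, hp₀2⟩ := hodd
  obtain ⟨H, hcl, hop, hind, hdet, hmin⟩ := hex
  set P : {x // x ∈ S} → ℕ := fun p => p.1 with hPdef
  haveI instP : ∀ i : {x // x ∈ S}, Fact (Nat.Prime (P i)) := inst
  set i₀ : {x // x ∈ S} := ⟨p₀, hp₀S⟩ with hi₀
  haveI instp₀ : Fact (Nat.Prime p₀) := ⟨hprime p₀ hp₀S⟩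
  obtain ⟨e₀, he₀⟩ := MinProof.exists_level (P := P) hop
  set e : {x // x ∈ S} → ℕ := fun i => max (e₀ i) 1 + 1 with hedef
  have hkerH : ∀ x, MinProof.PiRed P e x = 1 → x ∈ H := by
    intro x hx
    apply he₀
    rw [MinProof.mem_ker_iff] at hx ⊢
    intro i j k
    refine le_trans (hx i j k) (MinProof.pneg_antitone (instP i) ?_)
    exact le_trans (le_max_left _ _) (Nat.le_succ _)
  haveI instNZ : ∀ i : {x // x ∈ S}, NeZero (P i ^ e i) :=
    fun i => ⟨pow_ne_zero _ (instP i).out.ne_zero⟩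
  set Gf := Subgroup.map (MinProof.PiRed P e) H with hGf
  set f : ↥Gf →* ∀ i : {x // x ∈ S}, (ZMod (P i ^ e i))ˣ :=
    (MinProof.detFin P e).comp Gf.subtype with hf
  have hdet' : Subgroup.map (MinProof.detBig P) H = ⊤ := hdet
  have hredU_surj : Function.Surjective (MinProof.redU P e) := by
    intro ub
    have h1 : ∀ i : {x // x ∈ S}, ∃ u : ℤ_[P i]ˣ,
        Units.map (PadicInt.toZModPow (e i)).toMonoidHom u = ub i := fun i =>
      MinProof.exists_unit_lift (e i) (Nat.le_add_left 1 _) (ub i)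
    choose u hu using h1
    exact ⟨u, funext hu⟩
  have fsurj : Function.Surjective ⇑f := by
    intro ub
    obtain ⟨u, hu⟩ := hredU_surj ub
    have humem : u ∈ Subgroup.map (MinProof.detBig P) H := by rw [hdet']; trivial
    obtain ⟨h, hh, hdh⟩ := humem
    refine ⟨⟨MinProof.PiRed P e h, Subgroup.mem_map_of_mem _ hh⟩, ?_⟩
    show MinProof.detFin P e (MinProof.PiRed P e h) = ub
    rw [MinProof.square_comm, hdh, hu]
  have hminG : ∀ K' : Subgroup ↥Gf, K' ≠ ⊤ → Subgroup.map f K' ≠ ⊤ := by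
    intro K' hK' hmap
    set Kb := Subgroup.map Gf.subtype K' with hKb
    set K : Subgroup (∀ p : {x // x ∈ S}, GL (Fin 2) ℤ_[p.1]) :=
      H ⊓ Subgroup.comap (MinProof.PiRed P e) Kb with hK
    have hKH : K ≤ H := inf_le_left
    have hKneH : K ≠ H := by
      intro hEq
      apply hK'
      rw [Subgroup.eq_top_iff']
      intro g'
      obtain ⟨h, hh, hph⟩ := g'.2
      have hhK : h ∈ K := by rw [hEq]; exact hh
      have h2 : MinProof.PiRed P e h ∈ Kb := (Subgroup.mem_inf.mp hhK).2
      rw [hph] at h2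
      obtain ⟨k', hk', hkeq⟩ := h2
      have h3 : k' = g' := Subtype.ext hkeq
      rwa [← h3]
    have hKlt : K < H := lt_of_le_of_ne hKH hKneH
    have hKcl : IsClosed (K : Set (∀ p : {x // x ∈ S}, GL (Fin 2) ℤ_[p.1])) := by
      rw [hK, Subgroup.coe_inf, Subgroup.coe_comap]
      apply IsClosed.inter hcl
      have hfin : (Kb : Set (∀ i : {x // x ∈ S}, GL (Fin 2) (ZMod (P i ^ e i)))).Finite :=
        Set.toFinite _
      have hdecomp : (MinProof.PiRed P e) ⁻¹' (Kb : Set (∀ i : {x // x ∈ S},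
          GL (Fin 2) (ZMod (P i ^ e i)))) =
          ⋃ kb ∈ (Kb : Set (∀ i : {x // x ∈ S}, GL (Fin 2) (ZMod (P i ^ e i)))),
            (MinProof.PiRed P e) ⁻¹' {kb} := by
        ext x
        simp
      rw [hdecomp]
      apply Set.Finite.isClosed_biUnion hfin
      intro kb _
      by_cases hex2 : ∃ x₀, MinProof.PiRed P e x₀ = kb
      · obtain ⟨x₀, hx₀⟩ := hex2
        have hset : (MinProof.PiRed P e) ⁻¹' {kb} =
            (fun x => x₀⁻¹ * x) ⁻¹' {x | MinProof.PiRed P e x = 1} := by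
          ext x
          simp only [Set.mem_preimage, Set.mem_singleton_iff, Set.mem_setOf_eq]
          rw [MonoidHom.map_mul, MonoidHom.map_inv, hx₀]
          constructor
          · intro hxe; rw [hxe, inv_mul_cancel]
          · intro hxe
            have h4 := congrArg (fun t => kb * t) hxe
            simpa [← mul_assoc] using h4
        rw [hset]
        exact (MinProof.isClosed_ker P e).preimage (continuous_const.mul continuous_id)
      · have hempty : (MinProof.PiRed P e) ⁻¹' {kb} = ∅ := by
          ext x
          simp only [Set.mem_preimage, Set.mem_singleton_iff, Set.mem_empty_iff_false,
            iff_false]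
          exact fun hc => hex2 ⟨x, hc⟩
        rw [hempty]
        exact isClosed_empty
    have htopK : Subgroup.map (MinProof.detBig P) K = ⊤ := by
      rw [Subgroup.eq_top_iff']
      intro u
      have h1 : MinProof.redU P e u ∈ Subgroup.map f K' := by rw [hmap]; trivial
      obtain ⟨k', hk', hfk'⟩ := h1
      obtain ⟨h, hh, hph⟩ := k'.2
      have hhK : h ∈ K := by
        rw [hK]
        refine Subgroup.mem_inf.mpr ⟨hh, ?_⟩
        rw [Subgroup.mem_comap, hph]
        exact ⟨k', hk', rfl⟩
      have hcomm2 : MinProof.redU P e (MinProof.detBig P h) = MinProof.redU P e u := by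
        rw [← MinProof.square_comm, hph]
        exact hfk'
      set w := u * (MinProof.detBig P h)⁻¹ with hw
      have hwker : MinProof.redU P e w = 1 := by
        rw [hw, MonoidHom.map_mul, MonoidHom.map_inv, hcomm2, mul_inv_cancel]
      set D : ∀ p : {x // x ∈ S}, GL (Fin 2) ℤ_[p.1] :=
        fun i => MinProof.diagU (w i) with hD
      have hDker : MinProof.PiRed P e D = 1 := by
        funext i
        exact MinProof.redGL_diagU (e i) (w i) (congrFun hwker i)
      have hDK : D ∈ K := by
        rw [hK]
        refine Subgroup.mem_inf.mpr ⟨hkerH D hDker, ?_⟩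
        rw [Subgroup.mem_comap, hDker]
        exact Kb.one_mem
      refine ⟨h * D, K.mul_mem hhK hDK, ?_⟩
      rw [MonoidHom.map_mul]
      have hdD : MinProof.detBig P D = w := by
        funext i
        exact MinProof.det_diagU (w i)
      rw [hdD, hw, mul_comm u, ← mul_assoc, mul_inv_cancel, one_mul]
    exact hmin K hKcl hKlt htopK
  have hsyl := MinProof.sylow_normal_of_minimal f fsurj hminG
  set φ : ↥Gf →* GL (Fin 2) (ZMod (p₀ ^ (max (e₀ i₀) 1 + 1))) :=
    (Pi.evalMonoidHom (fun i : {x // x ∈ S} => GL (Fin 2) (ZMod (P i ^ e i))) i₀).comp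
      Gf.subtype with hφ
  refine MinProof.endgame p₀ hp₀2 (max (e₀ i₀) 1) (le_max_right _ _) ↥Gf hsyl φ ?_ ?_
  · intro ub
    obtain ⟨g, hg⟩ := fsurj (Pi.mulSingle i₀ ub)
    refine ⟨g, ?_⟩
    have h1 : Matrix.GeneralLinearGroup.det (φ g) = f g i₀ := rfl
    show Matrix.GeneralLinearGroup.det (φ g) = ub
    rw [h1, hg, Pi.mulSingle_eq_same]
  · intro Y
    set Yt : Matrix (Fin 2) (Fin 2) ℤ_[p₀] :=
      fun j k => (((Y j k).val : ℕ) : ℤ_[p₀]) with hYt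
    have hYtred : ∀ j k, PadicInt.toZModPow ((max (e₀ i₀) 1) + 1) (Yt j k) = Y j k := by
      intro j k
      show PadicInt.toZModPow ((max (e₀ i₀) 1) + 1) (((Y j k).val : ℕ) : ℤ_[p₀]) = Y j k
      rw [map_natCast, ZMod.natCast_val, ZMod.cast_id]
    set B : Matrix (Fin 2) (Fin 2) ℤ_[p₀] := 1 + ((p₀ : ℤ_[p₀]) ^ (max (e₀ i₀) 1)) • Yt with hB
    have hBu : IsUnit B := MinProof.isUnit_one_add_smul (max (e₀ i₀) 1) (le_max_right _ _) Yt
    set x : ∀ p : {x // x ∈ S}, GL (Fin 2) ℤ_[p.1] := Pi.mulSingle i₀ hBu.unit with hx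
    have hxi₀ : x i₀ = hBu.unit := by rw [hx]; exact Pi.mulSingle_eq_same _ _
    have hxH : x ∈ H := by
      apply he₀
      rw [MinProof.mem_ker_iff]
      intro i j k
      by_cases hii : i = i₀
      · subst hii
        rw [hxi₀]
        have h2 : (hBu.unit : Matrix (Fin 2) (Fin 2) ℤ_[p₀]) = B := IsUnit.unit_spec hBu
        rw [h2]
        have h3 : B j k - (1 : Matrix (Fin 2) (Fin 2) ℤ_[p₀]) j k =
            ((p₀ : ℤ_[p₀]) ^ (max (e₀ i₀) 1)) * Yt j k := by
          rw [hB]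
          simp [Matrix.add_apply, Matrix.smul_apply]
        rw [h3, norm_mul, PadicInt.norm_p_pow]
        have h4 : (p₀ : ℝ) ^ (-((max (e₀ i₀) 1 : ℕ) : ℤ)) * ‖Yt j k‖ ≤ (p₀ : ℝ) ^ (-((max (e₀ i₀) 1 : ℕ) : ℤ)) := by
          calc (p₀ : ℝ) ^ (-((max (e₀ i₀) 1 : ℕ) : ℤ)) * ‖Yt j k‖ ≤ (p₀ : ℝ) ^ (-((max (e₀ i₀) 1 : ℕ) : ℤ)) * 1 :=
                mul_le_mul_of_nonneg_left (PadicInt.norm_le_one _) (by positivity)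
          _ = (p₀ : ℝ) ^ (-((max (e₀ i₀) 1 : ℕ) : ℤ)) := mul_one _
        exact le_trans h4 (MinProof.pneg_antitone instp₀ (le_max_left _ _))
      · have h5 : x i = 1 := by rw [hx]; exact Pi.mulSingle_eq_of_ne hii _
        rw [h5]
        simp
    set m : ↥Gf := ⟨MinProof.PiRed P e x, Subgroup.mem_map_of_mem _ hxH⟩ with hm
    have hval2 : (RingHom.mapMatrix (PadicInt.toZModPow (p := p₀) ((max (e₀ i₀) 1) + 1))) B =
        1 + ((p₀ : ZMod (p₀ ^ ((max (e₀ i₀) 1) + 1))) ^ (max (e₀ i₀) 1)) • Y := by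
      ext j k
      rw [RingHom.mapMatrix_apply, Matrix.map_apply, hB]
      rw [Matrix.add_apply, Matrix.add_apply, Matrix.smul_apply, Matrix.smul_apply]
      rw [map_add]
      congr 1
      · by_cases hjk : j = k <;> simp [Matrix.one_apply, hjk]
      · rw [smul_eq_mul, smul_eq_mul, _root_.map_mul, map_pow, map_natCast, hYtred]
    refine ⟨m, ?_, ?_⟩
    · have hxpow : (MinProof.PiRed P e x) ^ p₀ = 1 := by
        funext i
        rw [Pi.pow_apply, Pi.one_apply]
        by_cases hii : i = i₀
        · subst hii
          apply Units.ext
          rw [Units.val_pow_eq_pow_val]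
          show ((RingHom.mapMatrix (PadicInt.toZModPow (p := p₀) ((max (e₀ i₀) 1) + 1)))
            ((x i₀ : Matrix (Fin 2) (Fin 2) ℤ_[p₀]))) ^ p₀ = 1
          rw [hxi₀]
          have h2 : (hBu.unit : Matrix (Fin 2) (Fin 2) ℤ_[p₀]) = B := IsUnit.unit_spec hBu
          rw [h2, hval2]
          exact MinProof.matrix_one_add_pow (le_max_right _ _) Y
        · have h6 : x i = 1 := by rw [hx]; exact Pi.mulSingle_eq_of_ne hii _
          have h7 : (MinProof.PiRed P e x) i = 1 := by
            show MinProof.redGL P i (e i) (x i) = 1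
            rw [h6, _root_.map_one]
          rw [h7, one_pow]
      have hmpow : m ^ p₀ = 1 := by
        apply Subtype.ext
        rw [Subgroup.coe_pow]
        show (MinProof.PiRed P e x) ^ p₀ = ((1 : ↥Gf) : ∀ i : {x // x ∈ S},
          GL (Fin 2) (ZMod (P i ^ e i)))
        rw [hxpow, OneMemClass.coe_one]
      have hdvd2 := orderOf_dvd_of_pow_eq_one hmpow
      rcases (Nat.dvd_prime instp₀.out).mp hdvd2 with h8 | h8
      · exact ⟨0, by rw [pow_zero]; exact h8⟩
      · exact ⟨1, by rw [pow_one]; exact h8⟩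
    · show ((MinProof.redGL P i₀ (e i₀) (x i₀)) : Matrix (Fin 2) (Fin 2)
        (ZMod (p₀ ^ ((max (e₀ i₀) 1) + 1)))) = 1 + ((p₀ : ZMod (p₀ ^ ((max (e₀ i₀) 1) + 1))) ^ (max (e₀ i₀) 1)) • Y
      rw [hxi₀]
      show (RingHom.mapMatrix (PadicInt.toZModPow (p := p₀) ((max (e₀ i₀) 1) + 1)))
        ((hBu.unit : Matrix (Fin 2) (Fin 2) ℤ_[p₀])) =
        1 + ((p₀ : ZMod (p₀ ^ ((max (e₀ i₀) 1) + 1))) ^ (max (e₀ i₀) 1)) • Y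
      rw [IsUnit.unit_spec, hval2]
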